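/- The set Λ := { f ∈ HahnSeries ℝ ℚ : for every C ∈ ℝ, the set supp(f) ∩ (−∞, C] is finite } — i.e., the set of formal sums Σ_i a_i λ^{r_i} with rational coefficients a_i and real exponents r_i tending to +∞ — is a subfield of the Hahn series field HahnSeries ℝ ℚ: it contains 0 and 1, and it is closed under addition, negation, multiplication, and inversion of nonzero elements. -/

import Mathlib

open HahnSeries Pointwise

abbrev P (f : HahnSeries ℝ ℚ) : Prop := ∀ C : ℝ, (f.support ∩ Set.Iic C).Finite

lemma P_add {f g : HahnSeries ℝ ℚ} (hf : P f) (hg : P g) : P (f + g) := fun C =>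
  ((hf C).union (hg C)).subset (by
    have := support_add_subset (x := f) (y := g)
    intro a ⟨ha, hC⟩
    rcases this ha with h | h
    · exact Or.inl ⟨h, hC⟩
    · exact Or.inr ⟨h, hC⟩)

lemma P_mul {f g : HahnSeries ℝ ℚ} (hf : P f) (hg : P g) : P (f * g) := by
  rcases eq_or_ne f 0 with rfl | hf0
  · intro C; simp
  rcases eq_or_ne g 0 with rfl | hg0
  · intro C; simp
  intro C
  refine (((hf (C - g.order)).add (hg (C - f.order))).subset ?_)
  rintro a ⟨ha, (hC : a ≤ C)⟩
  obtain ⟨i, hi, j, hj, rfl⟩ := support_mul_subset ha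
  simp only at hC
  have h1 : f.order ≤ i := f.order_le_of_coeff_ne_zero hi
  have h2 : g.order ≤ j := g.order_le_of_coeff_ne_zero hj
  exact Set.add_mem_add ⟨hi, by simp only [Set.mem_Iic]; linarith⟩
    ⟨hj, by simp only [Set.mem_Iic]; linarith⟩

lemma P_pow {f : HahnSeries ℝ ℚ} (hf : P f) : ∀ n, P (f ^ n) := by
  intro n
  induction n with
  | zero => intro C; exact (Set.finite_singleton 0).subset (fun a ⟨ha, _⟩ => by
      simpa using support_single_subset (by simpa using ha : a ∈ ((1 : HahnSeries ℝ ℚ)).support))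
  | succ n ih => rw [pow_succ]; exact P_mul ih hf

lemma P_hsum_powers {u : HahnSeries ℝ ℚ} (hu : P u) (h : 0 < u.orderTop) :
    P (SummableFamily.powers u).hsum := by
  rcases eq_or_ne u 0 with rfl | hu0
  · intro C
    refine (Set.finite_singleton 0).subset ?_
    rintro a ⟨ha, -⟩
    have := SummableFamily.support_hsum_subset ha
    obtain ⟨n, hn⟩ := Set.mem_iUnion.mp this
    rw [SummableFamily.powers_of_orderTop_pos h] at hn
    rcases n with _ | n
    · simpa using support_single_subset (by simpa using hn : a ∈ ((1 : HahnSeries ℝ ℚ)).support)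
    · simp [pow_succ] at hn
  intro C
  have hord : 0 < u.order := (zero_lt_orderTop_iff hu0).mp h
  obtain ⟨N, hN⟩ := Archimedean.arch C hord
  refine ((Set.Finite.biUnion (Set.finite_Iio (N+1)) (fun n _ => P_pow hu n C))).subset ?_
  rintro a ⟨ha, (hC : a ≤ C)⟩
  obtain ⟨n, hn⟩ := Set.mem_iUnion.mp (SummableFamily.support_hsum_subset ha)
  rw [SummableFamily.powers_of_orderTop_pos h] at hn
  have horder : (u ^ n).order ≤ a := (u ^ n).order_le_of_coeff_ne_zero hn
  rw [order_pow] at horder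
  have hnN : n < N + 1 := by
    by_contra hc
    push_neg at hc
    have h2 : (n : ℝ) * u.order ≤ a := by rw [← nsmul_eq_mul]; exact horder
    have h3 : C ≤ (N : ℝ) * u.order := by rw [← nsmul_eq_mul]; exact hN
    have h4 : (N : ℝ) + 1 ≤ (n : ℝ) := by exact_mod_cast hc
    nlinarith [hord]
  exact Set.mem_biUnion hnN ⟨hn, hC⟩

lemma P_single (r : ℝ) (c : ℚ) : P (single r c) := fun C =>
  (Set.finite_singleton r).subset (fun a ⟨ha, _⟩ => support_single_subset ha)

lemma P_one : P (1 : HahnSeries ℝ ℚ) := P_single 0 1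

lemma P_neg {f : HahnSeries ℝ ℚ} (hf : P f) : P (-f) := fun C => by
  have : (-f).support = f.support := support_neg
  rw [this]; exact hf C

lemma P_inv {f : HahnSeries ℝ ℚ} (hf : P f) (hf0 : f ≠ 0) : P f⁻¹ := by
  have hinv : f⁻¹ = (single (-f.order)) (f.leadingCoeff)⁻¹ *
      (SummableFamily.powers (1 - single (-f.order) (f.leadingCoeff)⁻¹ * f)).hsum := rfl
  rw [hinv]
  refine P_mul (P_single _ _) (P_hsum_powers ?_
    (unit_aux f (inv_mul_cancel₀ (leadingCoeff_ne_zero.mpr hf0)) _ (neg_add_cancel _)))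
  have : (1 : HahnSeries ℝ ℚ) - single (-f.order) (f.leadingCoeff)⁻¹ * f =
      1 + -(single (-f.order) (f.leadingCoeff)⁻¹ * f) := by ring
  rw [this]
  exact P_add P_one (P_neg (P_mul (P_single _ _) hf))



/-- The set `Λ` of Hahn series over `ℝ` with rational coefficients whose support meets every
interval `(-∞, C]` in a finite set — i.e. the formal sums `Σᵢ aᵢ λ^{rᵢ}` with `aᵢ ∈ ℚ`,
`rᵢ ∈ ℝ` and `rᵢ → ∞` — is a subfield of `HahnSeries ℝ ℚ`: it contains `0` and `1`, and is
closed under addition, negation, multiplication, and inversion of nonzero elements. -/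
theorem stmt_12 :
    (0 : HahnSeries ℝ ℚ) ∈ {f : HahnSeries ℝ ℚ | ∀ C : ℝ, (f.support ∩ Set.Iic C).Finite} ∧
    (1 : HahnSeries ℝ ℚ) ∈ {f : HahnSeries ℝ ℚ | ∀ C : ℝ, (f.support ∩ Set.Iic C).Finite} ∧
    (∀ f g : HahnSeries ℝ ℚ,
      f ∈ {f : HahnSeries ℝ ℚ | ∀ C : ℝ, (f.support ∩ Set.Iic C).Finite} →
      g ∈ {f : HahnSeries ℝ ℚ | ∀ C : ℝ, (f.support ∩ Set.Iic C).Finite} →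
      f + g ∈ {f : HahnSeries ℝ ℚ | ∀ C : ℝ, (f.support ∩ Set.Iic C).Finite}) ∧
    (∀ f : HahnSeries ℝ ℚ,
      f ∈ {f : HahnSeries ℝ ℚ | ∀ C : ℝ, (f.support ∩ Set.Iic C).Finite} →
      -f ∈ {f : HahnSeries ℝ ℚ | ∀ C : ℝ, (f.support ∩ Set.Iic C).Finite}) ∧
    (∀ f g : HahnSeries ℝ ℚ,
      f ∈ {f : HahnSeries ℝ ℚ | ∀ C : ℝ, (f.support ∩ Set.Iic C).Finite} →
      g ∈ {f : HahnSeries ℝ ℚ | ∀ C : ℝ, (f.support ∩ Set.Iic C).Finite} →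
      f * g ∈ {f : HahnSeries ℝ ℚ | ∀ C : ℝ, (f.support ∩ Set.Iic C).Finite}) ∧
    (∀ f : HahnSeries ℝ ℚ,
      f ∈ {f : HahnSeries ℝ ℚ | ∀ C : ℝ, (f.support ∩ Set.Iic C).Finite} →
      f ≠ 0 →
      f⁻¹ ∈ {f : HahnSeries ℝ ℚ | ∀ C : ℝ, (f.support ∩ Set.Iic C).Finite}) := by
  refine ⟨fun C => by simp, P_one, fun f g hf hg => P_add hf hg,
    fun f hf => P_neg hf, fun f g hf hg => P_mul hf hg, fun f hf h0 => P_inv hf h0⟩
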